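/- For a continuous function f on [a,b] with continuous second derivative, let s be the piecewise linear interpolant of f on a partition a = x_0 < x_1 < ... < x_p = b, defined on each subinterval [x_{j-1}, x_j] by s(x) = ((x - x_{j-1})/(x_j - x_{j-1})) f(x_j) + ((x_j - x)/(x_j - x_{j-1})) f(x_{j-1}). Then for all x in [a,b], |f(x) - s(x)| ≤ (1/8) (Δx)^2 · max_{a ≤ t ≤ b} |f''(t)|, where Δx = max_j (x_j - x_{j-1}). -/

import Mathlib

open Set

/-- Second-order Taylor (Lagrange remainder) bound on an interval, proved via Rolle. -/
lemma taylor2_bound {a b M : ℝ} {f f' f'' : ℝ → ℝ}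
    (hf' : ∀ t ∈ Set.Icc a b, HasDerivWithinAt f (f' t) (Set.Icc a b) t)
    (hf'' : ∀ t ∈ Set.Icc a b, HasDerivWithinAt f' (f'' t) (Set.Icc a b) t)
    (hM : ∀ t ∈ Set.Icc a b, |f'' t| ≤ M)
    {t y : ℝ} (ht : t ∈ Set.Icc a b) (hy : y ∈ Set.Icc a b) :
    |f y - f t - f' t * (y - t)| ≤ M / 2 * (y - t) ^ 2 := by
  rcases eq_or_ne t y with rfl | hne
  · simp
  have hyt : (y - t) ^ 2 ≠ 0 := pow_ne_zero _ (sub_ne_zero.2 (Ne.symm hne))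
  set K : ℝ := (f y - f t - f' t * (y - t)) / (y - t) ^ 2 with hK
  set φ : ℝ → ℝ := fun u => f y - f u - f' u * (y - u) - K * (y - u) ^ 2 with hφ
  have hφt : φ t = 0 := by
    simp only [hφ, hK]
    field_simp
    ring
  have hφy : φ y = 0 := by simp [hφ]
  set lo := min t y with hlo
  set hi := max t y with hhi
  have hlohi : lo < hi := min_lt_max.2 hne
  have hsub : Set.Icc lo hi ⊆ Set.Icc a b := by
    intro u hu
    constructor
    · exact le_trans (le_min ht.1 hy.1) hu.1
    · exact le_trans hu.2 (max_le ht.2 hy.2)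
  have hfc : ContinuousOn f (Set.Icc a b) := fun u hu => (hf' u hu).continuousWithinAt
  have hf'c : ContinuousOn f' (Set.Icc a b) := fun u hu => (hf'' u hu).continuousWithinAt
  have hφc : ContinuousOn φ (Set.Icc lo hi) := by
    apply ContinuousOn.sub
    apply ContinuousOn.sub
    apply ContinuousOn.sub continuousOn_const (hfc.mono hsub)
    · exact (hf'c.mono hsub).mul (continuousOn_const.sub continuousOn_id)
    · exact continuousOn_const.mul (((continuousOn_const.sub continuousOn_id)).pow 2)
  have hend : φ lo = φ hi := by
    rcases min_cases t y with ⟨h1, _⟩ | ⟨h1, _⟩ <;> rcases max_cases t y with ⟨h2, _⟩ | ⟨h2, _⟩ <;>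
      rw [hlo, hhi, h1, h2] <;> simp [hφt, hφy]
  have hder : ∀ u ∈ Set.Ioo lo hi, HasDerivAt φ ((2 * K - f'' u) * (y - u)) u := by
    intro u hu
    have huab : u ∈ Set.Icc a b := hsub (Set.Ioo_subset_Icc_self hu)
    have hua : a < u := lt_of_le_of_lt (le_min ht.1 hy.1) hu.1
    have hub : u < b := lt_of_lt_of_le hu.2 (max_le ht.2 hy.2)
    have hnhds : Set.Icc a b ∈ nhds u := Icc_mem_nhds hua hub
    have hdf : HasDerivAt f (f' u) u := (hf' u huab).hasDerivAt hnhds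
    have hdf' : HasDerivAt f' (f'' u) u := (hf'' u huab).hasDerivAt hnhds
    have hB : HasDerivAt (fun u : ℝ => y - u) (-1) u := by
      simpa using (hasDerivAt_id u).const_sub y
    have hA : HasDerivAt (fun u => f y - f u) (-f' u) u := hdf.const_sub (f y)
    have hC : HasDerivAt (fun u => f' u * (y - u)) (f'' u * (y - u) + f' u * (-1)) u :=
      hdf'.mul hB
    have hD : HasDerivAt (fun u : ℝ => (y - u) ^ 2) ((2 : ℕ) * (y - u) ^ 1 * (-1)) u :=
      hB.pow 2
    have := (hA.sub hC).sub (hD.const_mul K)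
    refine this.congr_deriv ?_
    push_cast
    ring
  obtain ⟨c, hc, hc0⟩ := exists_hasDerivAt_eq_zero hlohi hφc hend hder
  have hcy : y - c ≠ 0 := by
    have h1 := hc.1
    have h2 := hc.2
    rcases le_total t y with h | h
    · rw [hhi, max_eq_right h] at h2
      exact sub_ne_zero.2 h2.ne'
    · rw [hlo, min_eq_right h] at h1
      exact sub_ne_zero.2 h1.ne
  have h2K : 2 * K = f'' c := by
    rcases mul_eq_zero.1 hc0 with h | h
    · linarith [sub_eq_zero.1 (by linarith : 2 * K - f'' c = 0)]
    · exact absurd h hcy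
  have hKval : f y - f t - f' t * (y - t) = f'' c / 2 * (y - t) ^ 2 := by
    have : K * (y - t) ^ 2 = f y - f t - f' t * (y - t) := by
      rw [hK]; field_simp
    rw [← this]
    have : K = f'' c / 2 := by linarith
    rw [this]
  have hcab : c ∈ Set.Icc a b := hsub (Set.Ioo_subset_Icc_self hc)
  have hfc2 : |f'' c| ≤ M := hM c hcab
  rw [hKval]
  calc |f'' c / 2 * (y - t) ^ 2| = |f'' c| / 2 * (y - t) ^ 2 := by
        rw [abs_mul, abs_div, abs_pow, sq_abs, abs_two]
    _ ≤ M / 2 * (y - t) ^ 2 := by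
        apply mul_le_mul_of_nonneg_right _ (sq_nonneg _)
        linarith

/-- Piecewise linear interpolation error bound:
for `f` twice continuously differentiable on `[a,b]`, the piecewise linear
interpolant `s` on a partition `a = x_0 < ... < x_p = b` satisfies
`|f(x) - s(x)| ≤ (1/8) Δx² · max |f''|`. -/
theorem stmt0 (p : ℕ) (hp : 0 < p) (a b : ℝ) (hab : a < b)
    (f f' f'' s : ℝ → ℝ) (x : Fin (p + 1) → ℝ)
    (hx0 : x 0 = a) (hxp : x (Fin.last p) = b) (hmono : StrictMono x)
    (hf' : ∀ t ∈ Set.Icc a b, HasDerivWithinAt f (f' t) (Set.Icc a b) t)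
    (hf'' : ∀ t ∈ Set.Icc a b, HasDerivWithinAt f' (f'' t) (Set.Icc a b) t)
    (hcont : ContinuousOn f'' (Set.Icc a b))
    (Δx M : ℝ)
    (hΔ : ∀ j : Fin p, x j.succ - x j.castSucc ≤ Δx)
    (hM : ∀ t ∈ Set.Icc a b, |f'' t| ≤ M)
    (hs : ∀ j : Fin p, ∀ t ∈ Set.Icc (x j.castSucc) (x j.succ),
        s t = ((t - x j.castSucc) / (x j.succ - x j.castSucc)) * f (x j.succ)
            + ((x j.succ - t) / (x j.succ - x j.castSucc)) * f (x j.castSucc)) :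
    ∀ t ∈ Set.Icc a b, |f t - s t| ≤ (1 / 8) * Δx ^ 2 * M := by
  intro t ht
  -- find the subinterval containing t
  obtain ⟨j, hjl, hjr⟩ : ∃ j : Fin p, x j.castSucc ≤ t ∧ t ≤ x j.succ := by
    classical
    set S : Finset (Fin p) := Finset.univ.filter (fun j => x j.castSucc ≤ t) with hS
    have hSne : S.Nonempty := by
      refine ⟨⟨0, hp⟩, ?_⟩
      simp only [hS, Finset.mem_filter, Finset.mem_univ, true_and]
      have : (Fin.castSucc (⟨0, hp⟩ : Fin p)) = (0 : Fin (p + 1)) := rfl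
      rw [this, hx0]; exact ht.1
    set j := S.max' hSne with hj
    have hjmem : j ∈ S := S.max'_mem hSne
    have hjl : x j.castSucc ≤ t := (Finset.mem_filter.1 hjmem).2
    refine ⟨j, hjl, ?_⟩
    by_contra h
    push_neg at h
    have hne : (j : ℕ) + 1 ≠ p := by
      intro hcon
      have : j.succ = Fin.last p := by ext; simpa using hcon
      rw [this, hxp] at h
      exact absurd ht.2 (not_le.2 h)
    have hlt : (j : ℕ) + 1 < p := lt_of_le_of_ne j.isLt hne
    set j2 : Fin p := ⟨(j : ℕ) + 1, hlt⟩ with hj2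
    have hcast : (j2.castSucc : Fin (p + 1)) = j.succ := by ext; simp [hj2]
    have hj2mem : j2 ∈ S := by
      simp only [hS, Finset.mem_filter, Finset.mem_univ, true_and]
      rw [hcast]; exact le_of_lt h
    have := S.le_max' j2 hj2mem
    rw [← hj] at this
    have : (j2 : ℕ) ≤ (j : ℕ) := this
    simp [hj2] at this
  set c := x j.castSucc with hc
  set d := x j.succ with hd
  have hcd : c < d := hmono (Fin.castSucc_lt_succ (i := j))
  have hac : a ≤ c := by
    rw [← hx0]; exact hmono.monotone (Fin.zero_le _)
  have hdb : d ≤ b := by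
    rw [← hxp]; exact hmono.monotone (Fin.le_last _)
  have hcab : c ∈ Set.Icc a b := ⟨hac, le_trans hcd.le hdb⟩
  have hdab : d ∈ Set.Icc a b := ⟨le_trans hac hcd.le, hdb⟩
  have hst : s t = ((t - c) / (d - c)) * f d + ((d - t) / (d - c)) * f c :=
    hs j t ⟨hjl, hjr⟩
  set Ed := f d - f t - f' t * (d - t) with hEd
  set Ec := f c - f t - f' t * (c - t) with hEc
  have hEdb : |Ed| ≤ M / 2 * (d - t) ^ 2 := taylor2_bound hf' hf'' hM ht hdab
  have hEcb : |Ec| ≤ M / 2 * (c - t) ^ 2 := taylor2_bound hf' hf'' hM ht hcab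
  have hM0 : 0 ≤ M := le_trans (abs_nonneg _) (hM t ht)
  set A := t - c with hA
  set B := d - t with hB
  have hA0 : 0 ≤ A := sub_nonneg.2 hjl
  have hB0 : 0 ≤ B := sub_nonneg.2 hjr
  have hABpos : 0 < A + B := by simp only [hA, hB]; linarith
  have hΔj : A + B ≤ Δx := by
    have := hΔ j
    simp only [hA, hB, ← hc, ← hd]
    linarith
  have hkey : (A + B) * (f t - s t) = -(A * Ed + B * Ec) := by
    rw [hst, hEd, hEc]
    have hdc : d - c ≠ 0 := ne_of_gt (by linarith)
    have hABdc : A + B = d - c := by simp only [hA, hB]; ring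
    rw [hABdc]
    field_simp
    ring
  have h1 : (A + B) * |f t - s t| ≤ A * |Ed| + B * |Ec| := by
    calc (A + B) * |f t - s t| = |(A + B) * (f t - s t)| := by
          rw [abs_mul, abs_of_nonneg hABpos.le]
      _ = |A * Ed + B * Ec| := by rw [hkey, abs_neg]
      _ ≤ |A * Ed| + |B * Ec| := abs_add_le _ _
      _ = A * |Ed| + B * |Ec| := by rw [abs_mul, abs_mul, abs_of_nonneg hA0, abs_of_nonneg hB0]
  have h2 : (A + B) * |f t - s t| ≤ M / 2 * (A * B) * (A + B) := by
    have e1 : A * |Ed| ≤ A * (M / 2 * B ^ 2) := by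
      apply mul_le_mul_of_nonneg_left _ hA0
      simpa [hB] using hEdb
    have e2 : B * |Ec| ≤ B * (M / 2 * A ^ 2) := by
      apply mul_le_mul_of_nonneg_left _ hB0
      have : (c - t) ^ 2 = A ^ 2 := by simp only [hA]; ring
      calc |Ec| ≤ M / 2 * (c - t) ^ 2 := hEcb
        _ = M / 2 * A ^ 2 := by rw [this]
    calc (A + B) * |f t - s t| ≤ A * |Ed| + B * |Ec| := h1
      _ ≤ A * (M / 2 * B ^ 2) + B * (M / 2 * A ^ 2) := add_le_add e1 e2
      _ = M / 2 * (A * B) * (A + B) := by ring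
  have h3 : |f t - s t| ≤ M / 2 * (A * B) := by
    refine le_of_mul_le_mul_left ?_ hABpos
    calc (A + B) * |f t - s t| ≤ M / 2 * (A * B) * (A + B) := h2
      _ = (A + B) * (M / 2 * (A * B)) := by ring
  have hAB : A * B ≤ Δx ^ 2 / 4 := by
    nlinarith [sq_nonneg (A - B), mul_nonneg (sub_nonneg.2 hΔj) (by linarith : (0:ℝ) ≤ Δx + (A + B))]
  calc |f t - s t| ≤ M / 2 * (A * B) := h3
    _ ≤ M / 2 * (Δx ^ 2 / 4) := mul_le_mul_of_nonneg_left hAB (by linarith)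
    _ = 1 / 8 * Δx ^ 2 * M := by ring
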